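/- For all n ∈ ℕ, inv(n) ≤ ⌊(n−1)/2⌋ + inv(⌈(n−1)/2⌉). -/

import Mathlib

/-- Inverting a set `X` in a digraph `D`: edges with both endpoints in `X`
are reversed, all other edges are unchanged. -/
def Invert {V : Type*} (D : V → V → Prop) (X : Set V) : V → V → Prop :=
  fun u v => (u ∈ X ∧ v ∈ X ∧ D v u) ∨ (¬(u ∈ X ∧ v ∈ X) ∧ D u v)

/-- A digraph is acyclic if it has no directed cycle. -/
def IsAcyclic {V : Type*} (D : V → V → Prop) : Prop :=
  ∀ x : V, ¬ Relation.TransGen D x x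

/-- A loopless digraph without digons (an oriented graph). -/
def IsOriented {V : Type*} (D : V → V → Prop) : Prop :=
  ∀ u v, D u v → ¬ D v u

/-- A tournament: an oriented graph with exactly one edge between any two
distinct vertices. -/
def IsTournament {V : Type*} (D : V → V → Prop) : Prop :=
  (∀ u v, D u v → ¬ D v u) ∧ ∀ u v, u ≠ v → D u v ∨ D v u

/-- The inversion number of a digraph: the minimum length of a decycling
family, i.e. a sequence of sets whose successive inversion makes `D` acyclic. -/
noncomputable def invNum {V : Type*} (D : V → V → Prop) : ℕ :=
  sInf {k | ∃ Xs : List (Set V), Xs.length = k ∧ IsAcyclic (Xs.foldl Invert D)}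

/-- The maximum inversion number of an `n`-vertex tournament. -/
noncomputable def maxInv (n : ℕ) : ℕ :=
  sSup {m | ∃ T : Fin n → Fin n → Prop, IsTournament T ∧ invNum T = m}

-- basic invert lemmas
lemma invert_off {V : Type*} {D : V → V → Prop} {X : Set V} {u w : V}
    (h : ¬(u ∈ X ∧ w ∈ X)) : Invert D X u w ↔ D u w := by
  unfold Invert; tauto

lemma isTournament_invert {V : Type*} {D : V → V → Prop} (hT : IsTournament D) (X : Set V) :
    IsTournament (Invert D X) := by
  obtain ⟨ho, htot⟩ := hT
  constructor
  · intro u v huv hvu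
    rcases huv with ⟨hu, hv, h1⟩ | ⟨hn, h1⟩ <;> rcases hvu with ⟨hu', hv', h2⟩ | ⟨hn', h2⟩
    · exact ho _ _ h1 h2
    · exact hn' ⟨hv, hu⟩
    · exact hn ⟨hv', hu'⟩
    · exact ho _ _ h1 h2
  · intro u v huv
    by_cases hX : u ∈ X ∧ v ∈ X
    · rcases htot u v huv with h | h
      · exact Or.inr (Or.inl ⟨hX.2, hX.1, h⟩)
      · exact Or.inl (Or.inl ⟨hX.1, hX.2, h⟩)
    · rcases htot u v huv with h | h
      · exact Or.inl (Or.inr ⟨hX, h⟩)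
      · refine Or.inr (Or.inr ⟨fun hc => hX ⟨hc.2, hc.1⟩, h⟩)

lemma isTournament_foldl {V : Type*} {D : V → V → Prop} (hT : IsTournament D)
    (Xs : List (Set V)) : IsTournament (Xs.foldl Invert D) := by
  induction Xs generalizing D with
  | nil => exact hT
  | cons X Xs ih => exact ih (isTournament_invert hT X)

lemma foldl_off {V : Type*} {C : Set V} {Xs : List (Set V)}
    (hXs : ∀ X ∈ Xs, X ⊆ C) {D : V → V → Prop} {u w : V} (h : u ∉ C ∨ w ∉ C) :
    Xs.foldl Invert D u w ↔ D u w := by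
  induction Xs generalizing D with
  | nil => rfl
  | cons X Xs ih =>
    have hX : X ⊆ C := hXs X (by simp)
    rw [List.foldl_cons, ih (fun Y hY => hXs Y (by simp [hY]))]
    refine invert_off ?_
    rcases h with h | h
    · exact fun hc => h (hX hc.1)
    · exact fun hc => h (hX hc.2)

lemma foldl_image {α β : Type*} {g : α → β} (hg : Function.Injective g)
    (Ys : List (Set α)) (D : β → β → Prop) (u w : α) :
    (Ys.map (fun Y => g '' Y)).foldl Invert D (g u) (g w) ↔
      Ys.foldl Invert (fun a b => D (g a) (g b)) u w := by
  induction Ys generalizing D with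
  | nil => rfl
  | cons Y Ys ih =>
    have hpb : (fun a b => Invert D (g '' Y) (g a) (g b)) =
        Invert (fun a b => D (g a) (g b)) Y := by
      funext a b
      refine propext ?_
      unfold Invert
      simp [hg.mem_set_image]
    rw [List.map_cons, List.foldl_cons, List.foldl_cons, ih (Invert D (g '' Y)), hpb]

-- swap lemmas
lemma invert_swap {V : Type*} (D : V → V → Prop) (X : Set V) :
    Invert (Function.swap D) X = Function.swap (Invert D X) := by
  funext u v
  refine propext ?_
  unfold Invert Function.swap
  tauto

lemma foldl_swap {V : Type*} (Xs : List (Set V)) (D : V → V → Prop) :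
    Xs.foldl Invert (Function.swap D) = Function.swap (Xs.foldl Invert D) := by
  induction Xs generalizing D with
  | nil => rfl
  | cons X Xs ih => rw [List.foldl_cons, List.foldl_cons, invert_swap, ih]

lemma isAcyclic_swap {V : Type*} {D : V → V → Prop} (h : IsAcyclic D) :
    IsAcyclic (Function.swap D) := fun x hx => h x (Relation.transGen_swap.mp hx)

lemma invNum_swap {V : Type*} (D : V → V → Prop) :
    invNum (Function.swap D) = invNum D := by
  unfold invNum
  congr 1
  ext k
  constructor
  · rintro ⟨Xs, hlen, hac⟩
    refine ⟨Xs, hlen, ?_⟩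
    rw [foldl_swap] at hac
    exact isAcyclic_swap hac
  · rintro ⟨Xs, hlen, hac⟩
    exact ⟨Xs, hlen, by rw [foldl_swap]; exact isAcyclic_swap hac⟩

lemma isTournament_swap {V : Type*} {D : V → V → Prop} (h : IsTournament D) :
    IsTournament (Function.swap D) :=
  ⟨fun u v huv hvu => h.1 _ _ hvu huv, fun u v huv => (h.2 u v huv).symm⟩

-- rank acyclicity
lemma transGen_rank_le {V : Type*} {D : V → V → Prop} {f : V → ℕ}
    (hm : ∀ u w, D u w → f u ≤ f w) {x y : V} (h : Relation.TransGen D x y) :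
    f x ≤ f y := by
  induction h with
  | single h => exact hm _ _ h
  | tail _ h ih => exact ih.trans (hm _ _ h)

lemma acyclic_of_rank {V : Type*} {D : V → V → Prop} {f : V → ℕ} {C : Set V}
    (hm : ∀ u w, D u w → f u ≤ f w)
    (hs : ∀ u w, D u w → f u < f w ∨ (u ∈ C ∧ w ∈ C))
    (hC : ∀ x, ¬ Relation.TransGen (fun u w => D u w ∧ u ∈ C ∧ w ∈ C) x x) :
    IsAcyclic D := by
  intro x hx
  apply hC x
  have claim : ∀ {a b : V}, Relation.TransGen D a b → f b ≤ f a →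
      Relation.TransGen (fun u w => D u w ∧ u ∈ C ∧ w ∈ C) a b := by
    intro a b hab
    induction hab with
    | single h =>
      intro hle
      rcases hs _ _ h with h' | h'
      · omega
      · exact Relation.TransGen.single ⟨h, h'⟩
    | tail hab h ih =>
      intro hle
      have h1 := transGen_rank_le hm hab
      have h2 := hm _ _ h
      rcases hs _ _ h with h' | h'
      · omega
      · exact Relation.TransGen.tail (ih (by omega)) ⟨h, h'⟩
  exact claim hx le_rfl

lemma transGen_lift {α β : Type*} (g : α → β) (R : β → β → Prop) (R' : α → α → Prop)
    (hre : ∀ u w, R u w → (∃ a, g a = u) ∧ (∃ b, g b = w))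
    (h : ∀ a b, R (g a) (g b) → R' a b) :
    ∀ {x y : β}, Relation.TransGen R x y → ∀ a b, g a = x → g b = y →
      Relation.TransGen R' a b := by
  intro x y hxy
  induction hxy with
  | single hr =>
    rintro a b rfl rfl
    exact Relation.TransGen.single (h _ _ hr)
  | tail hxy hr ih =>
    rintro a b rfl rfl
    obtain ⟨⟨c, rfl⟩, -⟩ := hre _ _ hr
    exact Relation.TransGen.tail (ih a c rfl rfl) (h _ _ hr)

lemma peel {V : Type*} (r : V → ℕ) (P : List V) :
    ∀ (D : V → V → Prop), IsTournament D →
    P.Pairwise (fun a b => r a < r b) →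
    ∀ good : Set V, (∀ x ∈ P, x ∉ good) →
    (∀ s ∈ good, ∀ w, s ≠ w → (D s w ↔ r s < r w)) →
    ∃ Xs : List (Set V), Xs.length = P.length ∧
      IsTournament (Xs.foldl Invert D) ∧
      (∀ s ∈ good, ∀ w, s ≠ w → ((Xs.foldl Invert D) s w ↔ r s < r w)) ∧
      (∀ x ∈ P, ∀ w, r x < r w → (Xs.foldl Invert D) x w) ∧
      (∀ u w : V, ((¬ ∃ x ∈ P, r x ≤ r u) ∨ (¬ ∃ x ∈ P, r x ≤ r w)) →
        ((Xs.foldl Invert D) u w ↔ D u w)) := by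
  induction P with
  | nil =>
    intro D hT _ good _ hgood
    exact ⟨[], rfl, hT, hgood, by simp, fun u w _ => Iff.rfl⟩
  | cons x P' ih =>
    intro D hT hpair good hg hgood
    classical
    set X : Set V := {w | w = x ∨ (r x < r w ∧ D w x)} with hXdef
    have hXsub : ∀ w ∈ X, r x ≤ r w := by
      rintro w (rfl | ⟨h, -⟩)
      · exact le_rfl
      · exact h.le
    have hxX : x ∈ X := Or.inl rfl
    have hT₁ := isTournament_invert hT X
    have key : ∀ w, r x < r w → Invert D X x w := by
      intro w hw
      have hwx : w ≠ x := by rintro rfl; exact lt_irrefl _ hw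
      by_cases hD : D w x
      · exact Or.inl ⟨hxX, Or.inr ⟨hw, hD⟩, hD⟩
      · have hxw : D x w := (hT.2 x w hwx.symm).resolve_right hD
        refine Or.inr ⟨?_, hxw⟩
        rintro ⟨-, (rfl | ⟨-, h⟩)⟩
        · exact hwx rfl
        · exact hD h
    have goodnX : ∀ s ∈ good, s ∉ X := by
      rintro s hs (rfl | ⟨hlt, hDsx⟩)
      · exact hg s (List.mem_cons_self) hs
      · have hsx : s ≠ x := by rintro rfl; exact lt_irrefl _ hlt
        have := (hgood s hs x hsx).mp hDsx
        omega
    have hgood₁ : ∀ s ∈ good, ∀ w, s ≠ w → (Invert D X s w ↔ r s < r w) := by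
      intro s hs w hsw
      rw [invert_off (fun hc => goodnX s hs hc.1)]
      exact hgood s hs w hsw
    obtain ⟨Xs', hlen', hT', hgood', hpeel', hoff'⟩ :=
      ih (Invert D X) hT₁ (List.Pairwise.of_cons hpair) good
        (fun y hy => hg y (List.mem_cons_of_mem _ hy)) hgood₁
    have hxlow : ¬ ∃ z ∈ P', r z ≤ r x := by
      rintro ⟨z, hz, hle⟩
      have := (List.pairwise_cons.mp hpair).1 z hz
      omega
    refine ⟨X :: Xs', by simpa using hlen', ?_, ?_, ?_, ?_⟩
    · simpa using hT'
    · simpa using hgood'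
    · intro y hy w hw
      rcases List.mem_cons.mp hy with rfl | hy'
      · simp only [List.foldl_cons]
        exact (hoff' y w (Or.inl hxlow)).mpr (key w hw)
      · simpa using hpeel' y hy' w hw
    · intro u w h
      have h' : (¬ ∃ z ∈ P', r z ≤ r u) ∨ (¬ ∃ z ∈ P', r z ≤ r w) := by
        rcases h with h | h
        · exact Or.inl (fun ⟨z, hz, hle⟩ => h ⟨z, List.mem_cons_of_mem _ hz, hle⟩)
        · exact Or.inr (fun ⟨z, hz, hle⟩ => h ⟨z, List.mem_cons_of_mem _ hz, hle⟩)
      simp only [List.foldl_cons]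
      rw [hoff' u w h']
      refine invert_off ?_
      rcases h with h | h
      · exact fun hc => h ⟨x, List.mem_cons_self, hXsub u hc.1⟩
      · exact fun hc => h ⟨x, List.mem_cons_self, hXsub w hc.2⟩

lemma transGen_not {V : Type*} {R : V → V → Prop} (h : ∀ u w, ¬ R u w) {x y : V} :
    ¬ Relation.TransGen R x y := by
  intro hxy
  induction hxy with
  | single hs => exact h _ _ hs
  | tail _ hs ih => exact h _ _ hs

lemma exists_decycling {k : ℕ} {D : Fin k → Fin k → Prop} (hT : IsTournament D) :
    ∃ Xs : List (Set (Fin k)), Xs.length = k ∧ IsAcyclic (Xs.foldl Invert D) := by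
  have hpair : (List.finRange k).Pairwise (fun a b : Fin k => (a : ℕ) < (b : ℕ)) :=
    (List.pairwise_lt_finRange k).imp (fun h => h)
  obtain ⟨Xs, hlen, hT', -, hpeel, -⟩ :=
    peel (fun a : Fin k => (a : ℕ)) (List.finRange k) D hT hpair ∅ (by simp) (by simp)
  refine ⟨Xs, by simpa using hlen, ?_⟩
  have hup : ∀ u w, Xs.foldl Invert D u w → (u : ℕ) < (w : ℕ) := by
    intro u w huw
    have hne : u ≠ w := by
      rintro rfl
      exact hT'.1 _ _ huw huw
    rcases Nat.lt_trichotomy (u : ℕ) (w : ℕ) with h | h | h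
    · exact h
    · exact absurd (Fin.val_injective h) hne
    · exact absurd (hpeel w (List.mem_finRange w) u h) (hT'.1 _ _ huw)
  refine acyclic_of_rank (C := (∅ : Set (Fin k))) (f := fun a : Fin k => (a : ℕ))
    (fun u w h => (hup u w h).le) (fun u w h => Or.inl (hup u w h)) ?_
  intro x
  exact transGen_not (fun u w h => h.2.1)

lemma invNum_le {V : Type*} {D : V → V → Prop} {k : ℕ}
    (h : ∃ Xs : List (Set V), Xs.length = k ∧ IsAcyclic (Xs.foldl Invert D)) :
    invNum D ≤ k := Nat.sInf_le h

lemma invNum_le_maxInv {m : ℕ} {T : Fin m → Fin m → Prop} (hT : IsTournament T) :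
    invNum T ≤ maxInv m := by
  refine le_csSup ⟨m, ?_⟩ ⟨T, hT, rfl⟩
  rintro k ⟨T', hT', rfl⟩
  exact invNum_le (exists_decycling hT')

lemma invNum_opt {m : ℕ} {T : Fin m → Fin m → Prop} (hT : IsTournament T) :
    ∃ Xs : List (Set (Fin m)), Xs.length = invNum T ∧ IsAcyclic (Xs.foldl Invert T) := by
  have h : {k | ∃ Xs : List (Set (Fin m)), Xs.length = k ∧
      IsAcyclic (Xs.foldl Invert T)}.Nonempty := ⟨m, exists_decycling hT⟩
  exact Nat.sInf_mem h

open List in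
lemma pairwise_indexOf {α : Type*} [DecidableEq α] :
    ∀ {l : List α}, l.Nodup → l.Pairwise (fun a b => l.idxOf a < l.idxOf b) := by
  intro l
  induction l with
  | nil => intro _; exact List.Pairwise.nil
  | cons a t ih =>
    intro h
    rcases List.nodup_cons.mp h with ⟨ha, ht⟩
    refine List.pairwise_cons.mpr ⟨?_, ?_⟩
    · intro b hb
      have hba : b ≠ a := fun hc => ha (hc ▸ hb)
      rw [List.idxOf_cons_self, List.idxOf_cons_ne _ hba.symm]
      omega
    · refine (ih ht).imp_of_mem ?_
      intro b c hb hc hbc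
      have hba : b ≠ a := fun h' => ha (h' ▸ hb)
      have hca : c ≠ a := fun h' => ha (h' ▸ hc)
      rw [List.idxOf_cons_ne _ hba.symm, List.idxOf_cons_ne _ hca.symm]
      omega

lemma transGen_first {V : Type*} {R : V → V → Prop} {x y : V}
    (h : Relation.TransGen R x y) : ∃ z, R x z := by
  induction h with
  | single h => exact ⟨_, h⟩
  | tail _ _ ih => exact ih

lemma core {n : ℕ} (T : Fin n → Fin n → Prop) (hT : IsTournament T) (v : Fin n)
    (A B : Finset (Fin n)) (hA : ∀ w, w ∈ A ↔ T v w) (hB : ∀ w, w ∈ B ↔ T w v)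
    (m : ℕ) (hmA : m ≤ A.card) :
    invNum T ≤ (B.card + (A.card - m)) + maxInv m := by
  classical
  obtain ⟨C, hCA, hCcard⟩ := Finset.exists_subset_card_eq hmA
  have hvv : ¬ T v v := fun h => hT.1 v v h h
  have hvA : v ∉ A := fun h => hvv ((hA v).mp h)
  have hAB : ∀ w, w ∈ A → w ∉ B := fun w ha hb => hT.1 _ _ ((hA w).mp ha) ((hB w).mp hb)
  have hvB : v ∉ B := fun h => hvv ((hB v).mp h)
  set LB := B.sort (· ≤ ·) with hLB
  set LA := (A \ C).sort (· ≤ ·) with hLA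
  set LC := C.sort (· ≤ ·) with hLC
  set L := LB ++ v :: (LA ++ LC) with hL
  have memLB : ∀ w, w ∈ LB ↔ w ∈ B := fun w => Finset.mem_sort _
  have memLA : ∀ w, w ∈ LA ↔ w ∈ A \ C := fun w => Finset.mem_sort _
  have memLC : ∀ w, w ∈ LC ↔ w ∈ C := fun w => Finset.mem_sort _
  -- nodup
  have hnodup : L.Nodup := by
    refine List.Nodup.append (B.sort_nodup _) (List.nodup_cons.mpr ⟨?_, ?_⟩) ?_
    · intro hv
      rcases List.mem_append.mp hv with h | h
      · exact hvA (Finset.mem_sdiff.mp ((memLA v).mp h)).1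
      · exact hvA (hCA ((memLC v).mp h))
    · refine List.Nodup.append ((A \ C).sort_nodup _) (C.sort_nodup _) ?_
      intro w hw hw'
      exact (Finset.mem_sdiff.mp ((memLA w).mp hw)).2 ((memLC w).mp hw')
    · intro w hw hw'
      have hwB := (memLB w).mp hw
      rcases List.mem_cons.mp hw' with rfl | hw''
      · exact hvB hwB
      rcases List.mem_append.mp hw'' with h | h
      · exact hAB w (Finset.mem_sdiff.mp ((memLA w).mp h)).1 hwB
      · exact hAB w (hCA ((memLC w).mp h)) hwB
  have hcomplete : ∀ u : Fin n, u ∈ L := by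
    intro u
    by_cases huv : u = v
    · subst huv; exact List.mem_append.mpr (Or.inr (List.mem_cons_self))
    rcases hT.2 u v huv with h | h
    · exact List.mem_append.mpr (Or.inl ((memLB u).mpr ((hB u).mpr h)))
    · by_cases huC : u ∈ C
      · exact List.mem_append.mpr (Or.inr (List.mem_cons_of_mem _
          (List.mem_append.mpr (Or.inr ((memLC u).mpr huC)))))
      · exact List.mem_append.mpr (Or.inr (List.mem_cons_of_mem _
          (List.mem_append.mpr (Or.inl ((memLA u).mpr
            (Finset.mem_sdiff.mpr ⟨(hA u).mpr h, huC⟩))))))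
  set r : Fin n → ℕ := fun u => L.idxOf u with hr
  have hrinj : ∀ u w, r u = r w → u = w :=
    fun u w h => (List.idxOf_inj (hcomplete u)).mp h
  set q := LB.length with hq
  set t := q + 1 + LA.length with ht
  -- rank computations
  have rv : r v = q := by
    rw [hr]
    simp only [hL]
    rw [List.idxOf_append_of_notMem (fun h => hvB ((memLB v).mp h)),
      List.idxOf_cons_self]
    omega
  have rB : ∀ w ∈ B, r w < q := by
    intro w hw
    rw [hr]; simp only [hL]
    rw [List.idxOf_append_of_mem ((memLB w).mpr hw)]
    exact List.idxOf_lt_length_iff.mpr ((memLB w).mpr hw)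
  have rmid : ∀ w ∈ A \ C, q < r w ∧ r w < t := by
    intro w hw
    have hwv : w ≠ v := fun h => hvA (h ▸ (Finset.mem_sdiff.mp hw).1)
    have hwB : w ∉ LB := fun h => hAB w (Finset.mem_sdiff.mp hw).1 ((memLB w).mp h)
    rw [hr]; simp only [hL]
    rw [List.idxOf_append_of_notMem hwB, List.idxOf_cons_ne _ hwv.symm,
      List.idxOf_append_of_mem ((memLA w).mpr hw)]
    have := List.idxOf_lt_length_iff.mpr ((memLA w).mpr hw)
    omega
  have rC : ∀ w ∈ C, t ≤ r w := by
    intro w hw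
    have hwA : w ∈ A := hCA hw
    have hwv : w ≠ v := fun h => hvA (h ▸ hwA)
    have hwB : w ∉ LB := fun h => hAB w hwA ((memLB w).mp h)
    have hwLA : w ∉ LA := fun h => (Finset.mem_sdiff.mp ((memLA w).mp h)).2 hw
    rw [hr]; simp only [hL]
    rw [List.idxOf_append_of_notMem hwB, List.idxOf_cons_ne _ hwv.symm,
      List.idxOf_append_of_notMem hwLA]
    omega
  have rnonC : ∀ u, u ∉ C → r u < t := by
    intro u huC
    by_cases huv : u = v
    · subst huv; omega
    rcases hT.2 u v huv with h | h
    · have := rB u ((hB u).mpr h); omega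
    · have := rmid u (Finset.mem_sdiff.mpr ⟨(hA u).mpr h, huC⟩); omega
  have hgoodv : ∀ w, v ≠ w → (T v w ↔ r v < r w) := by
    intro w hvw
    constructor
    · intro h
      by_cases hwC : w ∈ C
      · have := rC w hwC; omega
      · have := rmid w (Finset.mem_sdiff.mpr ⟨(hA w).mpr h, hwC⟩); omega
    · intro h
      rcases hT.2 v w hvw with h' | h'
      · exact h'
      · have := rB w ((hB w).mpr h'); omega
  -- the peel list
  set P := LB ++ LA with hP
  have hPsub : P.Sublist L := by
    refine List.Sublist.append_left ?_ LB
    exact ((List.sublist_append_left LA LC).cons v)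
  have hpairP : P.Pairwise (fun a b => r a < r b) :=
    (pairwise_indexOf hnodup).sublist hPsub
  have hmemP : ∀ x, x ∈ P ↔ (x ∈ B ∨ x ∈ A \ C) := by
    intro x
    rw [hP, List.mem_append, memLB, memLA]
  have hgP : ∀ x ∈ P, x ∉ ({v} : Set (Fin n)) := by
    intro x hx hxv
    rcases (hmemP x).mp hx with h | h
    · exact hvB (hxv ▸ h)
    · exact hvA (hxv ▸ (Finset.mem_sdiff.mp h).1)
  obtain ⟨Xs, hlenXs, hT', hgood', hpeel', -⟩ :=
    peel r P T hT hpairP {v} hgP (by rintro s rfl w hsw; exact hgoodv w hsw)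
  set D' := Xs.foldl Invert T with hD'
  -- cases for non-C vertices
  have unonC : ∀ u : Fin n, u ∉ C → u = v ∨ u ∈ P := by
    intro u huC
    by_cases huv : u = v
    · exact Or.inl huv
    rcases hT.2 u v huv with h | h
    · exact Or.inr ((hmemP u).mpr (Or.inl ((hB u).mpr h)))
    · exact Or.inr ((hmemP u).mpr (Or.inr (Finset.mem_sdiff.mpr ⟨(hA u).mpr h, huC⟩)))
  have hdom : ∀ u w, u ∉ C → r u < r w → D' u w := by
    intro u w huC hr'
    have huw : u ≠ w := fun h => by rw [h] at hr'; omega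
    rcases unonC u huC with rfl | hu
    · exact (hgood' u rfl w huw).mpr hr'
    · exact hpeel' u hu w hr'
  -- embedding of C
  set e := C.orderIsoOfFin hCcard with he
  set g : Fin m → Fin n := fun i => (e i : Fin n) with hg'
  have hg : Function.Injective g := fun i j h => e.injective (Subtype.ext h)
  have hgC : ∀ i, g i ∈ C := fun i => (e i).2
  have hCrange : ∀ w ∈ C, ∃ i, g i = w := by
    intro w hw
    exact ⟨e.symm ⟨w, hw⟩, by simp [hg']⟩
  set TC : Fin m → Fin m → Prop := fun i j => D' (g i) (g j) with hTCdef
  have hTC : IsTournament TC :=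
    ⟨fun i j h h' => hT'.1 _ _ h h', fun i j hij => hT'.2 _ _ (fun hc => hij (hg hc))⟩
  obtain ⟨Ys, hYslen, hYsac⟩ := invNum_opt hTC
  set Ys' := Ys.map (fun Y => g '' Y) with hYs'
  have hYs'sub : ∀ X ∈ Ys', X ⊆ (↑C : Set (Fin n)) := by
    rintro X hX
    rw [hYs', List.mem_map] at hX
    obtain ⟨Y, -, rfl⟩ := hX
    rintro x ⟨i, -, rfl⟩
    exact hgC i
  set D'' := Ys'.foldl Invert D' with hD''
  have hcross : ∀ u w : Fin n, (u ∉ (↑C : Set (Fin n)) ∨ w ∉ (↑C : Set (Fin n))) →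
      (D'' u w ↔ D' u w) := fun u w h => foldl_off hYs'sub h
  have hT'' : IsTournament D'' := isTournament_foldl hT' Ys'
  have hstr : ∀ u w, D'' u w → r u < r w ∨ (u ∈ C ∧ w ∈ C) := by
    intro u w h
    by_cases hu : u ∈ C
    · by_cases hw : w ∈ C
      · exact Or.inr ⟨hu, hw⟩
      · exfalso
        have hD'uw : D' u w := (hcross u w (Or.inr (by simpa using hw))).mp h
        have h1 : r w < r u := by
          have := rC u hu; have := rnonC w hw; omega
        exact hT'.1 _ _ (hdom w u hw h1) hD'uw
    · left
      have hD'uw : D' u w := (hcross u w (Or.inl (by simpa using hu))).mp h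
      have huw : u ≠ w := fun hc => hT'.1 _ _ hD'uw (hc ▸ hD'uw)
      rcases Nat.lt_trichotomy (r u) (r w) with h' | h' | h'
      · exact h'
      · exact absurd (hrinj u w h') huw
      · exfalso
        by_cases hw : w ∈ C
        · have := rC w hw; have := rnonC u hu; omega
        · exact hT'.1 _ _ (hdom w u hw h') hD'uw
  set f : Fin n → ℕ := fun u => min (r u) t with hf
  have hac : IsAcyclic D'' := by
    refine acyclic_of_rank (f := f) (C := (↑C : Set (Fin n))) ?_ ?_ ?_
    · intro u w h
      rcases hstr u w h with h' | ⟨h1, h2⟩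
      · simp only [hf]; omega
      · simp only [hf]
        have := rC u h1; have := rC w h2
        omega
    · intro u w h
      rcases hstr u w h with h' | ⟨h1, h2⟩
      · by_cases hu : u ∈ C
        · by_cases hw : w ∈ C
          · exact Or.inr ⟨by simpa using hu, by simpa using hw⟩
          · exfalso; have := rC u hu; have := rnonC w hw; omega
        · left
          have h3 := rnonC u hu
          by_cases hw : w ∈ C
          · have := rC w hw; simp only [hf]; omega
          · have := rnonC w hw; simp only [hf]; omega
      · exact Or.inr ⟨by simpa using h1, by simpa using h2⟩
    · intro x hx
      have hpull : ∀ i j, D'' (g i) (g j) ↔ (Ys.foldl Invert TC) i j := by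
        intro i j
        rw [hD'', hYs']
        exact foldl_image hg Ys D' i j
      have hxC : x ∈ C := by
        obtain ⟨z, hz⟩ := transGen_first hx
        simpa using hz.2.1
      obtain ⟨i, rfl⟩ := hCrange x hxC
      refine hYsac i ?_
      refine transGen_lift g _ (Ys.foldl Invert TC)
        (fun u w h => ⟨hCrange u (by simpa using h.2.1), hCrange w (by simpa using h.2.2)⟩)
        (fun a b h => (hpull a b).mp h.1) hx i i rfl rfl
  -- conclude
  have hlen : (Xs ++ Ys').length = (B.card + (A.card - m)) + invNum TC := by
    rw [List.length_append, hlenXs, hP, List.length_append]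
    rw [hLB, hLA] at *
    simp only [Finset.length_sort, hYs', List.length_map, hYslen]
    rw [Finset.card_sdiff_of_subset hCA, hCcard]
  have : invNum T ≤ (B.card + (A.card - m)) + invNum TC := by
    refine invNum_le ⟨Xs ++ Ys', hlen, ?_⟩
    rw [List.foldl_append]
    exact hac
  have := invNum_le_maxInv hTC
  omega

lemma main_bound {n : ℕ} (hn : 0 < n) (T : Fin n → Fin n → Prop) (hT : IsTournament T) :
    invNum T ≤ (n - 1) / 2 + maxInv ((n - 1 + 1) / 2) := by
  classical
  set v : Fin n := ⟨0, hn⟩ with hv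
  set A := Finset.univ.filter (fun w => T v w) with hAdef
  set B := Finset.univ.filter (fun w => T w v) with hBdef
  have hA : ∀ w, w ∈ A ↔ T v w := by intro w; simp [hAdef]
  have hB : ∀ w, w ∈ B ↔ T w v := by intro w; simp [hBdef]
  have hdisj : Disjoint A B := by
    rw [Finset.disjoint_left]
    intro a ha hb
    exact hT.1 _ _ ((hA a).mp ha) ((hB a).mp hb)
  have hunion : A ∪ B = Finset.univ.erase v := by
    ext w
    rw [Finset.mem_union, hA, hB, Finset.mem_erase]
    constructor
    · rintro (h | h)
      · exact ⟨fun hc => hT.1 _ _ (hc ▸ h) (hc ▸ h), Finset.mem_univ w⟩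
      · exact ⟨fun hc => hT.1 _ _ (hc ▸ h) (hc ▸ h), Finset.mem_univ w⟩
    · rintro ⟨hne, -⟩
      rcases hT.2 v w (Ne.symm hne) with h | h
      · exact Or.inl h
      · exact Or.inr h
  have hcard : A.card + B.card = n - 1 := by
    rw [← Finset.card_union_of_disjoint hdisj, hunion,
      Finset.card_erase_of_mem (Finset.mem_univ v), Finset.card_univ, Fintype.card_fin]
  set m := (n - 1 + 1) / 2 with hm
  rcases le_or_gt m A.card with h | h
  · have hcore := core T hT v A B hA hB m h
    have : B.card + (A.card - m) ≤ (n - 1) / 2 := by omega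
    omega
  · have hmB : m ≤ B.card := by omega
    have hA' : ∀ w, w ∈ B ↔ Function.swap T v w := hB
    have hB' : ∀ w, w ∈ A ↔ Function.swap T w v := hA
    have hcore := core (Function.swap T) (isTournament_swap hT) v B A hA' hB' m hmB
    rw [invNum_swap] at hcore
    have : A.card + (B.card - m) ≤ (n - 1) / 2 := by omega
    omega

/-- For all `n`, `inv(n) ≤ ⌊(n−1)/2⌋ + inv(⌈(n−1)/2⌉)`. -/
theorem maxInv_le_half_add_maxInv_half (n : ℕ) :
    maxInv n ≤ (n - 1) / 2 + maxInv ((n - 1 + 1) / 2) := by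
  rcases Nat.eq_zero_or_pos n with rfl | hn
  · norm_num
  refine csSup_le' ?_
  rintro k ⟨T, hT, rfl⟩
  exact main_bound hn T hT
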